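/- Existence and uniqueness for the forward-backward system: if P is Lipschitz continuous and nonincreasing, then there exists a unique pair of C¹ functions (X,u) on [0,T] satisfying X'(t) = -δX(t) + (1/β)(u(t)-α)⁺ with X(0) = X₀ and u'(t) = (r+δ)u(t) - (P(X(t))-c)h with terminal condition u(T) = 0. -/

import Mathlib

open Set Real

set_option linter.unusedSectionVars false

section Aux

/-- The vector field of the forward-backward system. -/
noncomputable def vfFB (δ β r h α c : ℝ) (P : ℝ → ℝ) (p : ℝ × ℝ) : ℝ × ℝ :=
  (-δ * p.1 + (1 / β) * max (p.2 - α) 0, (r + δ) * p.2 - (P p.1 - c) * h)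

lemma lipschitz_vfFB (δ β r h α c : ℝ) (P : ℝ → ℝ) {L : NNReal} (hP : LipschitzWith L P) :
    ∃ K : NNReal, 1 ≤ K ∧ LipschitzWith K (vfFB δ β r h α c P) := by
  have hL0 : (0:ℝ) ≤ L := L.coe_nonneg
  have hA0 : (0:ℝ) ≤ |δ| + |1 / β| + |r + δ| + |h| * L := by positivity
  set k : ℝ := |δ| + |1 / β| + |r + δ| + |h| * L + 1 with hk
  have hk1 : 1 ≤ k := by rw [hk]; linarith
  have hk0 : 0 ≤ k := le_trans zero_le_one hk1
  refine ⟨⟨k, hk0⟩, by exact_mod_cast hk1, ?_⟩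
  apply LipschitzWith.of_dist_le_mul
  intro p q
  have hD1 : dist p.1 q.1 ≤ dist p q := by rw [Prod.dist_eq]; exact le_max_left _ _
  have hD2 : dist p.2 q.2 ≤ dist p q := by rw [Prod.dist_eq]; exact le_max_right _ _
  have hD0 : 0 ≤ dist p q := dist_nonneg
  rw [Real.dist_eq] at hD1 hD2
  have hPd : |P p.1 - P q.1| ≤ L * dist p q := by
    have h2 := hP.dist_le_mul p.1 q.1
    rw [Real.dist_eq, Real.dist_eq] at h2
    nlinarith
  have hmax : |max (p.2 - α) 0 - max (q.2 - α) 0| ≤ |p.2 - q.2| := by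
    simpa using abs_max_sub_max_le_abs (p.2 - α) (q.2 - α) 0
  have habs1 : 0 ≤ |δ| := abs_nonneg δ
  have habs2 : 0 ≤ |1/β| := abs_nonneg _
  have habs3 : 0 ≤ |r+δ| := abs_nonneg _
  have habs4 : 0 ≤ |h| := abs_nonneg _
  have e1 : dist (vfFB δ β r h α c P p).1 (vfFB δ β r h α c P q).1 ≤ k * dist p q := by
    rw [Real.dist_eq]
    simp only [vfFB]
    have heq : -δ * p.1 + 1 / β * max (p.2 - α) 0 - (-δ * q.1 + 1 / β * max (q.2 - α) 0)
        = -δ * (p.1 - q.1) + (1/β) * (max (p.2 - α) 0 - max (q.2 - α) 0) := by ring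
    rw [heq]
    have hb := abs_add_le (-δ * (p.1 - q.1)) ((1/β) * (max (p.2 - α) 0 - max (q.2 - α) 0))
    rw [abs_mul, abs_mul, abs_neg] at hb
    have t1 : |δ| * |p.1 - q.1| ≤ |δ| * dist p q := by gcongr
    have t2 : |1/β| * |max (p.2 - α) 0 - max (q.2 - α) 0| ≤ |1/β| * dist p q := by
      gcongr; exact hmax.trans hD2
    have : k * dist p q = (|δ| + |1/β| + (|r+δ| + |h| * L + 1)) * dist p q := by rw [hk]; ring
    rw [this]
    nlinarith [mul_nonneg (by positivity : (0:ℝ) ≤ |r+δ| + |h| * L + 1) hD0]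
  have e2 : dist (vfFB δ β r h α c P p).2 (vfFB δ β r h α c P q).2 ≤ k * dist p q := by
    rw [Real.dist_eq]
    simp only [vfFB]
    have heq : (r + δ) * p.2 - (P p.1 - c) * h - ((r + δ) * q.2 - (P q.1 - c) * h)
        = (r + δ) * (p.2 - q.2) + (-((P p.1 - P q.1) * h)) := by ring
    rw [heq]
    have hb := abs_add_le ((r + δ) * (p.2 - q.2)) (-((P p.1 - P q.1) * h))
    rw [abs_neg, abs_mul, abs_mul] at hb
    have t1 : |r+δ| * |p.2 - q.2| ≤ |r+δ| * dist p q := by gcongr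
    have t2 : |P p.1 - P q.1| * |h| ≤ (L * dist p q) * |h| := by gcongr
    have hkk : k * dist p q = (|r+δ| + |h| * L + (|δ| + |1/β| + 1)) * dist p q := by rw [hk]; ring
    rw [hkk]
    nlinarith [mul_nonneg (by positivity : (0:ℝ) ≤ |δ| + |1/β| + 1) hD0]
  have : dist (vfFB δ β r h α c P p) (vfFB δ β r h α c P q)
      = max (dist (vfFB δ β r h α c P p).1 (vfFB δ β r h α c P q).1)
        (dist (vfFB δ β r h α c P p).2 (vfFB δ β r h α c P q).2) := Prod.dist_eq
  rw [this]
  exact max_le e1 e2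

variable {E : Type*} [NormedAddCommGroup E] [NormedSpace ℝ E] [CompleteSpace E]

/-- Local existence for a globally Lipschitz autonomous vector field, with a uniform time step. -/
lemma local_exists_FB {v : E → E} {K : NNReal} (hv : LipschitzWith K v) (hK : 1 ≤ (K:ℝ))
    (t₀ : ℝ) (x₀ : E) :
    ∃ f : ℝ → E, f t₀ = x₀ ∧ ∀ t ∈ Icc (t₀ - (2*(K:ℝ))⁻¹) (t₀ + (2*(K:ℝ))⁻¹),
      HasDerivWithinAt f (v (f t)) (Icc (t₀ - (2*(K:ℝ))⁻¹) (t₀ + (2*(K:ℝ))⁻¹)) t := by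
  set ε : ℝ := (2*(K:ℝ))⁻¹ with hε
  have hKpos : (0:ℝ) < K := lt_of_lt_of_le zero_lt_one hK
  have hεpos : 0 < ε := by rw [hε]; positivity
  set R : ℝ := 2*ε*‖v x₀‖ + 1 with hR
  have hR0 : 0 ≤ R := by rw [hR]; positivity
  set C : ℝ := ‖v x₀‖ + K*R with hC
  have hC0 : 0 ≤ C := add_nonneg (norm_nonneg _) (mul_nonneg K.coe_nonneg hR0)
  have hpl : IsPicardLindelof (fun _ x => v x) (tmin := t₀ - ε) (tmax := t₀ + ε)
      ⟨t₀, by constructor <;> linarith⟩ x₀ ⟨R, hR0⟩ 0 ⟨C, hC0⟩ K := by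
    constructor
    · exact fun t _ => hv.lipschitzOnWith
    · exact fun x _ => continuousOn_const
    · intro t _ x hx
      have h1 : dist (v x) (v x₀) ≤ K * dist x x₀ := hv.dist_le_mul x x₀
      have h2 : dist x x₀ ≤ R := Metric.mem_closedBall.mp hx
      have h3 : ‖v x‖ ≤ dist (v x) (v x₀) + ‖v x₀‖ := by
        have := dist_triangle (v x) (v x₀) 0
        simpa [dist_eq_norm] using this
      have : K * dist x x₀ ≤ K * R := by gcongr
      show ‖v x‖ ≤ C
      rw [hC]; linarith
    · have hmax : max (t₀ + ε - t₀) (t₀ - (t₀ - ε)) = ε := by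
        rw [show t₀ + ε - t₀ = ε by ring, show t₀ - (t₀ - ε) = ε by ring, max_self]
      show C * max (t₀ + ε - t₀) (t₀ - (t₀ - ε)) ≤ R - 0
      rw [sub_zero, hmax, hC]
      have hKε : (K:ℝ) * ε = 1/2 := by
        rw [hε]; field_simp
      have : (‖v x₀‖ + K*R) * ε = ε * ‖v x₀‖ + (K * ε) * R := by ring
      rw [this, hKε, hR]
      nlinarith [norm_nonneg (v x₀)]
  obtain ⟨f, hf0, hf⟩ := hpl.exists_eq_forall_mem_Icc_hasDerivWithinAt₀
  exact ⟨f, hf0, hf⟩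

/-- Gluing two solutions matching at an interior junction. -/
lemma glue_FB {v : E → E} {a b c : ℝ} (hab : a ≤ b) (hbc : b ≤ c) {f g : ℝ → E}
    (hf : ∀ t ∈ Icc a b, HasDerivWithinAt f (v (f t)) (Icc a b) t)
    (hg : ∀ t ∈ Icc b c, HasDerivWithinAt g (v (g t)) (Icc b c) t)
    (hfg : f b = g b) :
    ∃ F : ℝ → E, (∀ t ∈ Icc a b, F t = f t) ∧ (∀ t ∈ Icc b c, F t = g t) ∧
      ∀ t ∈ Icc a c, HasDerivWithinAt F (v (F t)) (Icc a c) t := by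
  classical
  set F : ℝ → E := fun t => if t ≤ b then f t else g t with hF
  have hFf : ∀ t ∈ Icc a b, F t = f t := fun t ht => if_pos ht.2
  have hFg : ∀ t ∈ Icc b c, F t = g t := by
    intro t ht
    rcases eq_or_lt_of_le ht.1 with h | h
    · rw [hF]; simp only [← h, if_pos le_rfl]; exact hfg
    · exact if_neg (not_le.mpr h)
  refine ⟨F, hFf, hFg, ?_⟩
  intro t ht
  rcases lt_trichotomy t b with hlt | heq | hgt
  · -- t < b
    have htab : t ∈ Icc a b := ⟨ht.1, le_of_lt hlt⟩
    have h1 : HasDerivWithinAt F (v (F t)) (Icc a b) t := by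
      refine ((hf t htab).congr hFf (hFf t htab)).congr_deriv ?_
      rw [hFf t htab]
    refine h1.mono_of_mem_nhdsWithin ?_
    have h2 : Icc a c ∩ Iic b ⊆ Icc a b := fun x hx => ⟨hx.1.1, hx.2⟩
    refine Filter.mem_of_superset (Filter.inter_mem self_mem_nhdsWithin
      (mem_nhdsWithin_of_mem_nhds (Iic_mem_nhds hlt))) h2
  · -- t = b
    subst heq
    have h1 : HasDerivWithinAt F (v (F t)) (Icc a t) t := by
      have htab : t ∈ Icc a t := ⟨ht.1.trans ?_, le_rfl⟩
      · refine ((hf t ⟨ht.1, le_rfl⟩).congr (fun x hx => hFf x hx) (hFf t ⟨ht.1, le_rfl⟩)).congr_deriv ?_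
        rw [hFf t ⟨ht.1, le_rfl⟩]
      · exact le_rfl
    have h2 : HasDerivWithinAt F (v (F t)) (Icc t c) t := by
      have hFt : F t = g t := hFg t ⟨le_rfl, ht.2⟩
      refine ((hg t ⟨le_rfl, ht.2⟩).congr (fun x hx => hFg x hx) hFt).congr_deriv ?_
      rw [hFt]
    have := h1.union h2
    rwa [Icc_union_Icc_eq_Icc ht.1 ht.2] at this
  · -- t > b
    have htbc : t ∈ Icc b c := ⟨le_of_lt hgt, ht.2⟩
    have h1 : HasDerivWithinAt F (v (F t)) (Icc b c) t := by
      refine ((hg t htbc).congr hFg (hFg t htbc)).congr_deriv ?_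
      rw [hFg t htbc]
    refine h1.mono_of_mem_nhdsWithin ?_
    have h2 : Icc a c ∩ Ici b ⊆ Icc b c := fun x hx => ⟨hx.2, hx.1.2⟩
    refine Filter.mem_of_superset (Filter.inter_mem self_mem_nhdsWithin
      (mem_nhdsWithin_of_mem_nhds (Ici_mem_nhds hgt))) h2

/-- Existence of a solution on a symmetric interval of any length, by induction. -/
lemma global_exists_Icc_FB {v : E → E} {K : NNReal} (hv : LipschitzWith K v) (hK : 1 ≤ (K:ℝ))
    (x₀ : E) (n : ℕ) :
    ∃ f : ℝ → E, f 0 = x₀ ∧ ∀ t ∈ Icc (-(n+1) * (2*(K:ℝ))⁻¹) ((n+1) * (2*(K:ℝ))⁻¹),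
      HasDerivWithinAt f (v (f t)) (Icc (-(n+1) * (2*(K:ℝ))⁻¹) ((n+1) * (2*(K:ℝ))⁻¹)) t := by
  set ε : ℝ := (2*(K:ℝ))⁻¹ with hε
  have hKpos : (0:ℝ) < K := lt_of_lt_of_le zero_lt_one hK
  have hεpos : 0 < ε := by rw [hε]; positivity
  induction n with
  | zero =>
    obtain ⟨f, hf0, hf⟩ := local_exists_FB hv hK 0 x₀
    refine ⟨f, hf0, ?_⟩
    have e1 : (-(↑(0:ℕ)+1) * ε : ℝ) = 0 - ε := by push_cast; ring
    have e2 : ((↑(0:ℕ)+1) * ε : ℝ) = 0 + ε := by push_cast; ring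
    rw [e1, e2]
    exact hf
  | succ n ih =>
    obtain ⟨f, hf0, hf⟩ := ih
    set a : ℝ := -(n+1) * ε with ha
    set b : ℝ := (n+1) * ε with hb
    have hab : a ≤ b := by nlinarith [Nat.cast_nonneg (α := ℝ) n]
    have h0ab : (0:ℝ) ∈ Icc a b := by
      constructor <;> nlinarith [Nat.cast_nonneg (α := ℝ) n]
    -- extend to the right
    obtain ⟨g, hg0, hg⟩ := local_exists_FB hv hK b (f b)
    have hg' : ∀ t ∈ Icc b (b + ε), HasDerivWithinAt g (v (g t)) (Icc b (b + ε)) t := by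
      intro t ht
      have h1 : Icc b (b+ε) ⊆ Icc (b-ε) (b+ε) := Icc_subset_Icc (by linarith) le_rfl
      exact (hg t (h1 ht)).mono h1
    obtain ⟨F, hF1, hF2, hF⟩ := glue_FB hab (by linarith) hf hg' hg0.symm
    -- extend to the left
    obtain ⟨g₂, hg₂0, hg₂⟩ := local_exists_FB hv hK a (F a)
    have hg₂' : ∀ t ∈ Icc (a - ε) a, HasDerivWithinAt g₂ (v (g₂ t)) (Icc (a-ε) a) t := by
      intro t ht
      have h1 : Icc (a-ε) a ⊆ Icc (a-ε) (a+ε) := Icc_subset_Icc le_rfl (by linarith)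
      exact (hg₂ t (h1 ht)).mono h1
    obtain ⟨G, hG1, hG2, hG⟩ := glue_FB (by linarith : a - ε ≤ a) (by linarith : a ≤ b + ε)
      hg₂' hF (by rw [hg₂0])
    have hc1 : -((n:ℝ)+1+1) * ε = a - ε := by rw [ha]; ring
    have hc2 : ((n:ℝ)+1+1) * ε = b + ε := by rw [hb]; ring
    refine ⟨G, ?_, ?_⟩
    · rw [hG2 0 ⟨h0ab.1, by linarith [h0ab.2]⟩, hF1 0 h0ab, hf0]
    · intro t ht
      push_cast
      push_cast at ht
      rw [hc1, hc2]
      rw [hc1, hc2] at ht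
      exact hG t ht

/-- Global solutions with full derivatives on a given compact interval. -/
lemma global_exists_FB {v : E → E} {K : NNReal} (hv : LipschitzWith K v) (hK : 1 ≤ (K:ℝ))
    (x₀ : E) (M : ℝ) :
    ∃ f : ℝ → E, f 0 = x₀ ∧ ∀ t ∈ Icc (-M) M, HasDerivAt f (v (f t)) t := by
  set ε : ℝ := (2*(K:ℝ))⁻¹ with hε
  have hKpos : (0:ℝ) < K := lt_of_lt_of_le zero_lt_one hK
  have hεpos : 0 < ε := by rw [hε]; positivity
  obtain ⟨n, hn⟩ := exists_nat_gt (M / ε)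
  have hMn : M < (n+1) * ε := by
    have : M / ε < n + 1 := hn.trans (by linarith)
    calc M = (M / ε) * ε := by field_simp
      _ < (n+1) * ε := by nlinarith
  obtain ⟨f, hf0, hf⟩ := global_exists_Icc_FB hv hK x₀ n
  refine ⟨f, hf0, ?_⟩
  intro t ht
  have htmem : t ∈ Icc (-(n+1) * ε) ((n+1) * ε) := by
    constructor
    · have := ht.1; nlinarith
    · have := ht.2; nlinarith
  refine (hf t htmem).hasDerivAt ?_
  have : Ioo (-(n+1) * ε) ((n+1) * ε) ∈ nhds t := by
    refine Ioo_mem_nhds ?_ ?_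
    · have := ht.1; nlinarith
    · have := ht.2; nlinarith
  exact Filter.mem_of_superset this Ioo_subset_Icc_self

end Aux

lemma monoOn_aux {f g : ℝ → ℝ} {a b : ℝ} (hd : ∀ t ∈ Icc a b, HasDerivAt f (g t) t)
    (h0 : ∀ t ∈ Icc a b, 0 ≤ g t) : MonotoneOn f (Icc a b) := by
  apply monotoneOn_of_deriv_nonneg (convex_Icc a b)
  · exact fun t ht => (hd t ht).continuousAt.continuousWithinAt
  · intro t ht
    rw [interior_Icc] at ht
    exact ((hd t (Ioo_subset_Icc_self ht)).differentiableAt).differentiableWithinAt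
  · intro t ht
    rw [interior_Icc] at ht
    rw [(hd t (Ioo_subset_Icc_self ht)).deriv]
    exact h0 t (Ioo_subset_Icc_self ht)

/-- Monotone comparison: if two solutions of the system start with the same `X` but
`u₁ 0 < u₂ 0`, then the gap `u₂ - u₁` never decreases below its initial value. -/
lemma comparison_FB (δ β r h T' α c : ℝ) (P : ℝ → ℝ) (hβ : 0 < β) (hh : 0 < h)
    (hrδ : 0 ≤ r + δ) (hPanti : Antitone P) {X₁ u₁ X₂ u₂ : ℝ → ℝ}
    (h₁ : ∀ t ∈ Icc 0 T', HasDerivAt X₁ (-δ * X₁ t + (1/β) * max (u₁ t - α) 0) t ∧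
      HasDerivAt u₁ ((r+δ) * u₁ t - (P (X₁ t) - c) * h) t)
    (h₂ : ∀ t ∈ Icc 0 T', HasDerivAt X₂ (-δ * X₂ t + (1/β) * max (u₂ t - α) 0) t ∧
      HasDerivAt u₂ ((r+δ) * u₂ t - (P (X₂ t) - c) * h) t)
    (hX0 : X₁ 0 = X₂ 0) (hu0 : u₁ 0 < u₂ 0) (hT' : 0 ≤ T') :
    ∀ t ∈ Icc 0 T', u₂ 0 - u₁ 0 ≤ u₂ t - u₁ t := by
  set b : ℝ → ℝ := fun t => u₂ t - u₁ t with hbdef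
  set a : ℝ → ℝ := fun t => X₂ t - X₁ t with hadef
  -- step (i) : if b ≥ 0 on [0,s] ⊆ [0,T'] then a ≥ 0 on [0,s]
  have step1 : ∀ s, s ∈ Icc 0 T' → (∀ t ∈ Icc 0 s, 0 ≤ b t) → ∀ t ∈ Icc 0 s, 0 ≤ a t := by
    intro s hs hb t ht
    have hsub : Icc 0 s ⊆ Icc 0 T' := Icc_subset_Icc le_rfl hs.2
    set g : ℝ → ℝ := fun t => exp (δ * t) * a t with hgdef
    have hmono : MonotoneOn g (Icc 0 s) := by
      apply monoOn_aux (g := fun t => exp (δ * t) *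
        ((1/β) * (max (u₂ t - α) 0 - max (u₁ t - α) 0)))
      · intro τ hτ
        have hexp : HasDerivAt (fun t : ℝ => exp (δ * t)) (exp (δ * τ) * δ) τ := by
          have hlin : HasDerivAt (fun t : ℝ => δ * t) δ τ := by
            simpa using (hasDerivAt_id τ).const_mul δ
          exact hlin.exp
        have ha' : HasDerivAt a ((-δ * X₂ τ + (1/β) * max (u₂ τ - α) 0)
            - (-δ * X₁ τ + (1/β) * max (u₁ τ - α) 0)) τ :=
          ((h₂ τ (hsub hτ)).1).sub ((h₁ τ (hsub hτ)).1)
        have := hexp.mul ha'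
        convert this using 1
        · rfl
        · rfl
        · rfl
        simp only [hadef]
        ring
      · intro τ hτ
        have hmm : max (u₁ τ - α) 0 ≤ max (u₂ τ - α) 0 := by
          have := hb τ hτ
          apply max_le_max _ le_rfl
          simp only [hbdef] at this
          linarith
        have : 0 ≤ (1/β) * (max (u₂ τ - α) 0 - max (u₁ τ - α) 0) := by
          apply mul_nonneg (by positivity)
          linarith
        positivity
    have h0mem : (0:ℝ) ∈ Icc 0 s := ⟨le_rfl, ht.1.trans ht.2⟩
    have := hmono h0mem ht ht.1
    have hg0 : g 0 = 0 := by simp [hgdef, hadef, hX0]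
    rw [hg0] at this
    have hexp_pos : 0 < exp (δ * t) := exp_pos _
    simp only [hgdef] at this
    nlinarith
  -- step (ii) : if b ≥ 0 on [0,s] then b t ≥ exp((r+δ)t) * b 0 ≥ b 0 on [0,s]
  have step2 : ∀ s, s ∈ Icc 0 T' → (∀ t ∈ Icc 0 s, 0 ≤ b t) → ∀ t ∈ Icc 0 s, b 0 ≤ b t := by
    intro s hs hb t ht
    have hsub : Icc 0 s ⊆ Icc 0 T' := Icc_subset_Icc le_rfl hs.2
    have ha := step1 s hs hb
    set m : ℝ → ℝ := fun t => exp (-(r+δ) * t) * b t with hmdef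
    have hmono : MonotoneOn m (Icc 0 s) := by
      apply monoOn_aux (g := fun t => exp (-(r+δ) * t) * (-(P (X₂ t) - P (X₁ t)) * h))
      · intro τ hτ
        have hexp : HasDerivAt (fun t : ℝ => exp (-(r+δ) * t)) (exp (-(r+δ) * τ) * (-(r+δ))) τ := by
          have hlin : HasDerivAt (fun t : ℝ => -(r+δ) * t) (-(r+δ)) τ := by
            simpa using (hasDerivAt_id τ).const_mul (-(r+δ))
          exact hlin.exp
        have hb' : HasDerivAt b (((r+δ) * u₂ τ - (P (X₂ τ) - c) * h)
            - ((r+δ) * u₁ τ - (P (X₁ τ) - c) * h)) τ :=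
          ((h₂ τ (hsub hτ)).2).sub ((h₁ τ (hsub hτ)).2)
        have := hexp.mul hb'
        convert this using 1
        · rfl
        · rfl
        · rfl
        simp only [hmdef, hbdef]
        ring
      · intro τ hτ
        have hX : X₁ τ ≤ X₂ τ := by
          have := ha τ hτ; simp only [hadef] at this; linarith
        have hPle : P (X₂ τ) ≤ P (X₁ τ) := hPanti hX
        have : 0 ≤ -(P (X₂ τ) - P (X₁ τ)) * h := by
          apply mul_nonneg _ hh.le
          linarith
        positivity
    have h0mem : (0:ℝ) ∈ Icc 0 s := ⟨le_rfl, ht.1.trans ht.2⟩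
    have hm := hmono h0mem ht ht.1
    have hm0 : m 0 = b 0 := by simp [hmdef]
    rw [hm0] at hm
    simp only [hmdef] at hm
    -- b t ≥ exp((r+δ)t) * b 0 ≥ b 0
    have hexp1 : 1 ≤ exp ((r+δ) * t) := by
      rw [← exp_zero]
      apply exp_le_exp.mpr
      nlinarith [ht.1]
    have hexp_pos : 0 < exp (-(r+δ) * t) := exp_pos _
    have hb0 : 0 < b 0 := by simp only [hbdef]; linarith
    have hinv : exp (-(r+δ) * t) * exp ((r+δ) * t) = 1 := by
      rw [← exp_add]; ring_nf; exact exp_zero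
    nlinarith
  -- main argument by first crossing time
  have hb0 : 0 < b 0 := by simp only [hbdef]; linarith
  have hbcont : ContinuousOn b (Icc 0 T') :=
    fun t ht => (((h₂ t ht).2).sub ((h₁ t ht).2)).continuousAt.continuousWithinAt
  by_cases hZ : ∀ t ∈ Icc 0 T', 0 < b t
  · -- no crossing
    intro t ht
    have := step2 T' ⟨hT', le_rfl⟩ (fun τ hτ => (hZ τ hτ).le) t ht
    simpa [hbdef] using this
  · push_neg at hZ
    exfalso
    set Z : Set ℝ := {t | t ∈ Icc 0 T' ∧ b t ≤ 0} with hZdef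
    have hZne : Z.Nonempty := by
      obtain ⟨t, ht, hbt⟩ := hZ
      exact ⟨t, ht, hbt⟩
    have hZclosed : IsClosed Z := by
      have : Z = Icc 0 T' ∩ b ⁻¹' Iic 0 := by
        ext t; simp [hZdef, mem_preimage]
      rw [this]
      exact ContinuousOn.preimage_isClosed_of_isClosed hbcont isClosed_Icc isClosed_Iic
    have hZbdd : BddBelow Z := ⟨0, fun t ht => ht.1.1⟩
    set t₁ : ℝ := sInf Z with ht₁def
    have ht₁Z : t₁ ∈ Z := hZclosed.csInf_mem hZne hZbdd
    have ht₁Icc : t₁ ∈ Icc 0 T' := ht₁Z.1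
    have hbt₁ : b t₁ ≤ 0 := ht₁Z.2
    have ht₁pos : 0 < t₁ := by
      rcases lt_or_eq_of_le ht₁Icc.1 with hp | hp
      · exact hp
      · exfalso; rw [← hp] at hbt₁; linarith
    -- b > 0 on [0, t₁)
    have hbpos : ∀ t ∈ Ico 0 t₁, 0 < b t := by
      intro t ht
      by_contra hc
      push_neg at hc
      have : t ∈ Z := ⟨⟨ht.1, ht.2.le.trans ht₁Icc.2⟩, hc⟩
      exact absurd (csInf_le hZbdd this) (not_le.mpr ht.2)
    -- b ≥ 0 on [0, t₁] (at t₁ by continuity)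
    have hbnn : ∀ t ∈ Icc 0 t₁, 0 ≤ b t := by
      intro t ht
      rcases lt_or_eq_of_le ht.2 with hlt | heq
      · exact (hbpos t ⟨ht.1, hlt⟩).le
      · rw [heq]
        have hcb : ContinuousWithinAt b (Ico 0 t₁) t₁ :=
          (hbcont t₁ ht₁Icc).mono (fun x hx => ⟨hx.1, hx.2.le.trans ht₁Icc.2⟩)
        have hne : (nhdsWithin t₁ (Ico 0 t₁)).NeBot := by
          apply mem_closure_iff_nhdsWithin_neBot.mp
          rw [closure_Ico (ne_of_lt ht₁pos)]
          exact ⟨ht₁pos.le, le_rfl⟩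
        exact ge_of_tendsto hcb.tendsto
          (eventually_nhdsWithin_of_forall (fun x hx => (hbpos x hx).le))
    have := step2 t₁ ht₁Icc hbnn t₁ ⟨ht₁pos.le, le_rfl⟩
    linarith

def IsForwardSol (δ β r h α c : ℝ) (P : ℝ → ℝ) (T : ℝ) (X u : ℝ → ℝ) : Prop :=
  ∀ t ∈ Set.Icc (0 : ℝ) T,
    HasDerivAt X (-δ * X t + (1 / β) * max (u t - α) 0) t ∧
    HasDerivAt u ((r + δ) * u t - (P (X t) - c) * h) t

/-- Existence and uniqueness for the forward-backward system with
initial condition `X(0) = X₀` and terminal condition `u(T) = 0`. -/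
theorem stmt_3 (δ β r h T α c X₀ : ℝ) (hδ : 0 < δ) (hβ : 0 < β) (hr : 0 < r)
    (hh : 0 < h) (hT : 0 < T) (hα : 0 < α) (hX₀ : 0 ≤ X₀)
    (P : ℝ → ℝ) (hP : ∃ L : NNReal, LipschitzWith L P) (hPdec : StrictAnti P) :
    (∃ X u : ℝ → ℝ, IsForwardSol δ β r h α c P T X u ∧ X 0 = X₀ ∧ u T = 0) ∧
    (∀ X u X' u' : ℝ → ℝ,
      IsForwardSol δ β r h α c P T X u → IsForwardSol δ β r h α c P T X' u' →
      X 0 = X₀ → u T = 0 → X' 0 = X₀ → u' T = 0 →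
      ∀ t ∈ Set.Icc (0 : ℝ) T, X t = X' t ∧ u t = u' t) := by
  obtain ⟨L, hPL⟩ := hP
  obtain ⟨K, hK1, hKlip⟩ := lipschitz_vfFB δ β r h α c P hPL
  have hK1' : 1 ≤ (K:ℝ) := by exact_mod_cast hK1
  set v : ℝ × ℝ → ℝ × ℝ := vfFB δ β r h α c P with hv
  have hrδ : 0 ≤ r + δ := by linarith
  have hPanti : Antitone P := hPdec.antitone
  -- projecting a solution curve to its components
  have hcomp : ∀ (f : ℝ → ℝ × ℝ) (t : ℝ), HasDerivAt f (v (f t)) t →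
      HasDerivAt (fun τ => (f τ).1) (-δ * (f t).1 + (1/β) * max ((f t).2 - α) 0) t ∧
      HasDerivAt (fun τ => (f τ).2) ((r+δ) * (f t).2 - (P (f t).1 - c) * h) t := by
    intro f t hf
    constructor
    · have := (ContinuousLinearMap.fst ℝ ℝ ℝ).hasFDerivAt.comp_hasDerivAt t hf
      simpa [Function.comp_def, vfFB, hv] using this
    · have := (ContinuousLinearMap.snd ℝ ℝ ℝ).hasFDerivAt.comp_hasDerivAt t hf
      simpa [Function.comp_def, vfFB, hv] using this
  -- assembling a pair of component solutions into a curve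
  have hpair : ∀ (X u : ℝ → ℝ) (t : ℝ),
      HasDerivAt X (-δ * X t + (1 / β) * max (u t - α) 0) t →
      HasDerivAt u ((r + δ) * u t - (P (X t) - c) * h) t →
      HasDerivAt (fun τ => (X τ, u τ)) (v (X t, u t)) t := by
    intro X u t h1 h2
    exact h1.prodMk h2
  -- shooting solutions
  have hsol : ∀ s : ℝ, ∃ f : ℝ → ℝ × ℝ, f 0 = (X₀, s) ∧
      ∀ t ∈ Icc (-T) T, HasDerivAt f (v (f t)) t :=
    fun s => global_exists_FB hKlip hK1' (X₀, s) T
  choose sol hsol0 hsolD using hsol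
  have hsub : Icc (0:ℝ) T ⊆ Icc (-T) T := Icc_subset_Icc (by linarith) le_rfl
  have hsolIcc : ∀ s, ∀ t ∈ Icc (0:ℝ) T, HasDerivAt (sol s) (v (sol s t)) t :=
    fun s t ht => hsolD s t (hsub ht)
  have hcompIcc : ∀ s, ∀ t ∈ Icc (0:ℝ) T,
      HasDerivAt (fun τ => (sol s τ).1)
        (-δ * (sol s t).1 + (1/β) * max ((sol s t).2 - α) 0) t ∧
      HasDerivAt (fun τ => (sol s τ).2)
        ((r+δ) * (sol s t).2 - (P (sol s t).1 - c) * h) t :=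
    fun s t ht => hcomp (sol s) t (hsolIcc s t ht)
  set φ : ℝ → ℝ := fun s => (sol s T).2 with hφ
  -- coercivity of the shooting map
  have hφmono : ∀ s₁ s₂ : ℝ, s₁ < s₂ → s₂ - s₁ ≤ φ s₂ - φ s₁ := by
    intro s₁ s₂ hs
    have hX0 : (sol s₁ 0).1 = (sol s₂ 0).1 := by rw [hsol0 s₁, hsol0 s₂]
    have hu0 : (sol s₁ 0).2 < (sol s₂ 0).2 := by rw [hsol0 s₁, hsol0 s₂]; exact hs
    have := comparison_FB δ β r h T α c P hβ hh hrδ hPanti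
      (hcompIcc s₁) (hcompIcc s₂) hX0 hu0 hT.le T ⟨hT.le, le_rfl⟩
    have he1 : (sol s₁ 0).2 = s₁ := by rw [hsol0 s₁]
    have he2 : (sol s₂ 0).2 = s₂ := by rw [hsol0 s₂]
    rw [he1, he2] at this
    simpa [hφ] using this
  -- continuity of the shooting map via Grönwall
  have hφlip : ∀ s₁ s₂ : ℝ, dist (φ s₁) (φ s₂) ≤ exp ((K:ℝ) * T) * dist s₁ s₂ := by
    intro s₁ s₂
    have hG := dist_le_of_trajectories_ODE (v := fun _ p => v p) (K := K)
      (f := sol s₁) (g := sol s₂) (a := 0) (b := T) (δ := dist s₁ s₂)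
      (fun _ => hKlip)
      (fun t ht => (hsolIcc s₁ t ht).continuousAt.continuousWithinAt)
      (fun t ht => (hsolIcc s₁ t (Ico_subset_Icc_self ht)).hasDerivWithinAt)
      (fun t ht => (hsolIcc s₂ t ht).continuousAt.continuousWithinAt)
      (fun t ht => (hsolIcc s₂ t (Ico_subset_Icc_self ht)).hasDerivWithinAt)
      (by rw [hsol0 s₁, hsol0 s₂]; simp)
    have hT2 := hG T ⟨hT.le, le_rfl⟩
    have hd : dist (φ s₁) (φ s₂) ≤ dist (sol s₁ T) (sol s₂ T) := by
      rw [Prod.dist_eq]; exact le_max_right _ _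
    calc dist (φ s₁) (φ s₂) ≤ dist (sol s₁ T) (sol s₂ T) := hd
      _ ≤ dist s₁ s₂ * exp ((K:ℝ) * (T - 0)) := hT2
      _ = exp ((K:ℝ) * T) * dist s₁ s₂ := by rw [sub_zero]; ring
  have hφcont : Continuous φ := by
    have : LipschitzWith (Real.toNNReal (exp ((K:ℝ) * T))) φ := by
      apply LipschitzWith.of_dist_le_mul
      intro s₁ s₂
      have := hφlip s₁ s₂
      rwa [Real.coe_toNNReal _ (exp_nonneg _)]
    exact this.continuous
  -- root of the shooting map by IVT
  obtain ⟨sstar, _, hsstar⟩ : ∃ s, s ∈ Icc (-(|φ 0| + 1)) (|φ 0| + 1) ∧ φ s = 0 := by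
    have ha : -(|φ 0| + 1) ≤ |φ 0| + 1 := by
      have := abs_nonneg (φ 0); linarith
    have hlow : φ (-(|φ 0| + 1)) ≤ -1 := by
      have hm := hφmono (-(|φ 0| + 1)) 0 (by have := abs_nonneg (φ 0); linarith)
      have h2 := le_abs_self (φ 0)
      linarith
    have hhigh : 1 ≤ φ (|φ 0| + 1) := by
      have hm := hφmono 0 (|φ 0| + 1) (by have := abs_nonneg (φ 0); linarith)
      have := neg_abs_le (φ 0)
      linarith
    have h0mem : (0:ℝ) ∈ Icc (φ (-(|φ 0| + 1))) (φ (|φ 0| + 1)) := ⟨by linarith, by linarith⟩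
    have := intermediate_value_Icc ha hφcont.continuousOn h0mem
    obtain ⟨s, hs, hφs⟩ := this
    exact ⟨s, hs, hφs⟩
  constructor
  · -- existence
    refine ⟨fun t => (sol sstar t).1, fun t => (sol sstar t).2, ?_, ?_, ?_⟩
    · intro t ht
      exact hcompIcc sstar t ht
    · show (sol sstar 0).1 = X₀
      rw [hsol0 sstar]
    · exact hsstar
  · -- uniqueness
    intro X u X' u' hXu hXu' hX0 huT hX'0 hu'T
    have hu00 : u 0 = u' 0 := by
      by_contra hne
      rcases lt_or_gt_of_ne hne with hlt | hgt
      · have := comparison_FB δ β r h T α c P hβ hh hrδ hPanti hXu hXu'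
          (hX0.trans hX'0.symm) hlt hT.le T ⟨hT.le, le_rfl⟩
        rw [huT, hu'T] at this
        linarith
      · have := comparison_FB δ β r h T α c P hβ hh hrδ hPanti hXu' hXu
          (hX'0.trans hX0.symm) hgt hT.le T ⟨hT.le, le_rfl⟩
        rw [huT, hu'T] at this
        linarith
    -- uniqueness of the IVP
    set f : ℝ → ℝ × ℝ := fun t => (X t, u t) with hf
    set g : ℝ → ℝ × ℝ := fun t => (X' t, u' t) with hg
    have hfD : ∀ t ∈ Icc (0:ℝ) T, HasDerivAt f (v (f t)) t :=
      fun t ht => hpair X u t (hXu t ht).1 (hXu t ht).2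
    have hgD : ∀ t ∈ Icc (0:ℝ) T, HasDerivAt g (v (g t)) t :=
      fun t ht => hpair X' u' t (hXu' t ht).1 (hXu' t ht).2
    have heq : EqOn f g (Icc 0 T) := by
      apply ODE_solution_unique (v := fun _ p => v p) (K := K) (fun _ => hKlip)
        (fun t ht => (hfD t ht).continuousAt.continuousWithinAt)
        (fun t ht => (hfD t (Ico_subset_Icc_self ht)).hasDerivWithinAt)
        (fun t ht => (hgD t ht).continuousAt.continuousWithinAt)
        (fun t ht => (hgD t (Ico_subset_Icc_self ht)).hasDerivWithinAt)
      rw [hf, hg]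
      simp only [Prod.mk.injEq]
      exact ⟨hX0.trans hX'0.symm, hu00⟩
    intro t ht
    have := heq ht
    rw [hf, hg] at this
    simpa [Prod.ext_iff] using this
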